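/- Let K = ℤ/15ℤ, let W = {id, (12)(34), (13)(24), (14)(23)} ≤ S₄ be the Klein four-group, and let χ : W → U(K) be the character determined by χ((12)(34)) = 4, χ((13)(24)) = 4, χ((14)(23)) = 1. Let E be the free K-module of rank 2. Then the K-module [χ]⁴(E) = T⁴(E)/_{χ⁻¹}T⁴(E) is not a free ℤ/15ℤ-module. -/

import Mathlib

noncomputable section

open scoped TensorProduct

/-- The action of a permutation `σ` of `Fin d` on the `d`-th tensor power
`T^d(E)`, determined by `σ • (x₁ ⊗ ⋯ ⊗ x_d) = x_{σ⁻¹(1)} ⊗ ⋯ ⊗ x_{σ⁻¹(d)}`. -/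
def permAct (K : Type*) [CommRing K] (E : Type*) [AddCommGroup E] [Module K E]
    (d : ℕ) (σ : Equiv.Perm (Fin d)) :
    (⨂[K] (_ : Fin d), E) ≃ₗ[K] ⨂[K] (_ : Fin d), E :=
  PiTensorProduct.reindex K (fun _ : Fin d => E) σ

/-- The submodule `_{χ⁻¹}T^d(E)` of `T^d(E)` generated by the elements
`χ⁻¹(σ) z − σ z` for `σ ∈ W`; the quotient by it is the `d`-th
semi-symmetric power `[χ]^d(E)` of weight `χ`. -/
def chiKer {K : Type*} [CommRing K] (E : Type*) [AddCommGroup E] [Module K E]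
    {d : ℕ} (W : Subgroup (Equiv.Perm (Fin d))) (χ : W →* Kˣ) :
    Submodule K (⨂[K] (_ : Fin d), E) :=
  Submodule.span K {w | ∃ (σ : W) (z : ⨂[K] (_ : Fin d), E),
    w = (((χ σ)⁻¹ : Kˣ) : K) • z - permAct K E d (σ : Equiv.Perm (Fin d)) z}

/-- The `d`-th semi-symmetric power `[χ]^d(E) = T^d(E)/_{χ⁻¹}T^d(E)`
of weight `χ` of the `K`-module `E`. -/
abbrev SemiPow {K : Type*} [CommRing K] (E : Type*) [AddCommGroup E] [Module K E]
    {d : ℕ} (W : Subgroup (Equiv.Perm (Fin d))) (χ : W →* Kˣ) :=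
  (⨂[K] (_ : Fin d), E) ⧸ chiKer E W χ

/-- The decomposable `d-χ`-vector `x₁ χ ⋯ χ x_d`. -/
def semiMk {K : Type*} [CommRing K] {E : Type*} [AddCommGroup E] [Module K E]
    {d : ℕ} (W : Subgroup (Equiv.Perm (Fin d))) (χ : W →* Kˣ)
    (x : Fin d → E) : SemiPow E W χ :=
  Submodule.Quotient.mk (PiTensorProduct.tprod K x)

/-! ### Auxiliary setup for the example -/

abbrev K15 := ZMod 15
abbrev E2 := Fin 2 → K15
abbrev T4 := ⨂[K15] (_ : Fin 4), E2
abbrev WD := Fin 4 → Fin 2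

instance mod3 : Module (ZMod 15) (ZMod 3) where
  smul c a := (c.val : ZMod 3) * a
  one_smul := by decide
  mul_smul := by decide
  smul_zero := by decide
  smul_add := by decide
  add_smul := by decide
  zero_smul := by decide

instance mod5 : Module (ZMod 15) (ZMod 5) where
  smul c a := (c.val : ZMod 5) * a
  one_smul := by decide
  mul_smul := by decide
  smul_zero := by decide
  smul_add := by decide
  add_smul := by decide
  zero_smul := by decide

abbrev FF := (Fin 7 → ZMod 3) × (Fin 3 → ZMod 5)

def toF : T4 →ₗ[K15] (WD → K15) :=
  PiTensorProduct.lift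
    (MultilinearMap.pi fun w =>
      (MultilinearMap.mkPiAlgebra K15 (Fin 4) K15).compLinearMap fun i => LinearMap.proj (w i))

def bvec (w : WD) : T4 := PiTensorProduct.tprod K15 fun i => Pi.single (w i) 1

def fromF : (WD → K15) →ₗ[K15] T4 :=
  ∑ w : WD, (LinearMap.proj w).smulRight (bvec w)

lemma toF_tprod (x : Fin 4 → E2) :
    toF (PiTensorProduct.tprod K15 x) = fun w => ∏ i, x i (w i) := by
  simp [toF, MultilinearMap.pi_apply, MultilinearMap.compLinearMap_apply,
    MultilinearMap.mkPiAlgebra_apply, LinearMap.proj_apply]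
  rfl

lemma toF_bvec (w : WD) : toF (bvec w) = Pi.single w 1 := by
  rw [bvec, toF_tprod]
  have : ∀ w w' : WD, (∏ i, (Pi.single (w i) (1:K15) : E2) (w' i))
      = (Pi.single w (1:K15) : WD → K15) w' := by decide
  exact funext fun w' => this w w'

lemma fromF_single (w : WD) : fromF (Pi.single w 1) = bvec w := by
  rw [fromF]
  simp only [LinearMap.coe_sum, Finset.sum_apply, LinearMap.smulRight_apply,
    LinearMap.proj_apply]
  rw [Finset.sum_eq_single w]
  · simp
  · intro b _ hb; simp [Pi.single_apply, (Ne.symm hb)]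
  · simp

lemma left_inv : toF ∘ₗ fromF = LinearMap.id := by
  apply Module.Basis.ext (Pi.basisFun K15 WD)
  intro w
  simp only [Pi.basisFun_apply, LinearMap.comp_apply, LinearMap.id_apply]
  rw [fromF_single, toF_bvec]

lemma right_inv : fromF ∘ₗ toF = LinearMap.id := by
  apply PiTensorProduct.ext
  apply MultilinearMap.ext
  intro x
  simp only [LinearMap.compMultilinearMap_apply, LinearMap.comp_apply, LinearMap.id_apply]
  rw [toF_tprod]
  have hx : (PiTensorProduct.tprod K15 x : T4)
      = PiTensorProduct.tprod K15 fun i => ∑ k : Fin 2, (x i k) • (Pi.single k 1 : E2) := by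
    congr 1
    funext i k
    simp [Pi.single_apply]
  rw [hx, MultilinearMap.map_sum]
  have h2 : ∀ w : WD, ((PiTensorProduct.tprod K15) fun i => x i (w i) • (Pi.single (w i) 1 : E2))
      = (∏ i, x i (w i)) • bvec w := by
    intro w
    rw [bvec, MultilinearMap.map_smul_univ]
  simp only [h2]
  rw [fromF]
  simp

def Teq : T4 ≃ₗ[K15] (WD → K15) := LinearEquiv.ofLinear toF fromF left_inv right_inv

def B : Module.Basis WD K15 T4 := Module.Basis.ofEquivFun Teq

lemma B_apply (w : WD) : B w = bvec w := by
  simp only [B, Module.Basis.coe_ofEquivFun]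
  show Teq.symm (Pi.single w 1) = _
  have : Teq.symm (Pi.single w 1) = fromF (Pi.single w 1) := rfl
  rw [this, fromF_single]

/-- Orbit index of a word under the Klein four-group. -/
def orb (w : WD) : Fin 7 :=
  if w = ![0,0,0,0] then 0 else if w = ![1,1,1,1] then 1
  else if w = ![1,0,0,0] ∨ w = ![0,1,0,0] ∨ w = ![0,0,1,0] ∨ w = ![0,0,0,1] then 2
  else if w = ![0,1,1,1] ∨ w = ![1,0,1,1] ∨ w = ![1,1,0,1] ∨ w = ![1,1,1,0] then 3
  else if w = ![1,1,0,0] ∨ w = ![0,0,1,1] then 4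
  else if w = ![1,0,1,0] ∨ w = ![0,1,0,1] then 5
  else 6

def sgn5 (w : WD) : ZMod 5 :=
  if w = ![1,0,0,0] ∨ w = ![0,0,0,1] ∨ w = ![0,1,1,1] ∨ w = ![1,1,1,0] ∨ w = ![1,0,0,1] then 1
  else if w = ![0,1,0,0] ∨ w = ![0,0,1,0] ∨ w = ![1,0,1,1] ∨ w = ![1,1,0,1] ∨ w = ![0,1,1,0]
    then -1 else 0

def o5 : Fin 3 → Fin 7 := ![2, 3, 6]

def j5 (w : WD) : Fin 3 := if orb w = 2 then 0 else if orb w = 3 then 1 else 2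

def colF (w : WD) : FF :=
  (fun i => if orb w = i then 1 else 0, fun j => if orb w = o5 j then sgn5 w else 0)

def reps3 : Fin 7 → WD :=
  ![![0,0,0,0], ![1,1,1,1], ![1,0,0,0], ![0,1,1,1], ![1,1,0,0], ![1,0,1,0], ![1,0,0,1]]

def reps5 : Fin 3 → WD := ![![1,0,0,0], ![0,1,1,1], ![1,0,0,1]]

def phi0 : (WD → K15) →ₗ[K15] FF :=
  ∑ w : WD, (LinearMap.proj w).smulRight (colF w)

def phi : T4 →ₗ[K15] FF := phi0 ∘ₗ toF

lemma phi0_single (w : WD) : phi0 (Pi.single w 1) = colF w := by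
  rw [phi0]
  simp only [LinearMap.coe_sum, Finset.sum_apply, LinearMap.smulRight_apply,
    LinearMap.proj_apply]
  rw [Finset.sum_eq_single w]
  · simp
  · intro b _ hb; simp [Pi.single_apply, (Ne.symm hb)]
  · simp

lemma phi_bvec (w : WD) : phi (bvec w) = colF w := by
  rw [phi, LinearMap.comp_apply, toF_bvec, phi0_single]

lemma permAct_bvec (σ : Equiv.Perm (Fin 4)) (w : WD) :
    permAct K15 E2 4 σ (bvec w) = bvec (fun i => w (σ.symm i)) := by
  simp [permAct, bvec, PiTensorProduct.reindex_tprod]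

lemma key (c : K15) (σ : Equiv.Perm (Fin 4))
    (h : ∀ w : WD, c • colF w - colF (fun i => w (σ.symm i)) = 0) :
    ∀ z : T4, phi (c • z - permAct K15 E2 4 σ z) = 0 := by
  have h0 : phi ∘ₗ (c • LinearMap.id - (permAct K15 E2 4 σ).toLinearMap) = 0 := by
    apply Module.Basis.ext B
    intro w
    simp only [LinearMap.comp_apply, LinearMap.sub_apply, LinearMap.smul_apply,
      LinearMap.id_apply, LinearEquiv.coe_toLinearMap, LinearMap.zero_apply]
    rw [B_apply, permAct_bvec, map_sub, map_smul, phi_bvec, phi_bvec]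
    exact h w
  intro z
  have := LinearMap.congr_fun h0 z
  simpa using this
/-- The section `F → SemiPow`. -/
def psi (W : Subgroup (Equiv.Perm (Fin 4))) (χ : W →* (ZMod 15)ˣ) :
    FF →ₗ[K15] SemiPow E2 W χ where
  toFun v :=
    (∑ i, ((10 * (v.1 i).val : K15)) •
      (Submodule.Quotient.mk (bvec (reps3 i)) : SemiPow E2 W χ))
    + ∑ j, ((6 * (v.2 j).val : K15)) •
      (Submodule.Quotient.mk (bvec (reps5 j)) : SemiPow E2 W χ)
  map_add' u v := by
    have h3 : ∀ a b : ZMod 3, ((10 * ((a+b).val) : K15)) = 10*a.val + 10*b.val := by decide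
    have h5 : ∀ a b : ZMod 5, ((6 * ((a+b).val) : K15)) = 6*a.val + 6*b.val := by decide
    simp only [Prod.fst_add, Prod.snd_add, Pi.add_apply, h3, h5, add_smul]
    rw [Finset.sum_add_distrib, Finset.sum_add_distrib]
    abel
  map_smul' c v := by
    have h3 : ∀ (c : K15) (a : ZMod 3), ((10 * ((c • a).val) : K15)) = c * (10*a.val) := by decide
    have h5 : ∀ (c : K15) (a : ZMod 5), ((6 * ((c • a).val) : K15)) = c * (6*a.val) := by decide
    simp only [Prod.smul_fst, Prod.smul_snd, Pi.smul_apply, h3, h5, RingHom.id_apply]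
    rw [smul_add, Finset.smul_sum, Finset.smul_sum]
    simp only [mul_smul]
lemma psi_colF (W : Subgroup (Equiv.Perm (Fin 4))) (χ : W →* (ZMod 15)ˣ) (w : WD) :
    psi W χ (colF w)
      = (10 : K15) • (Submodule.Quotient.mk (bvec (reps3 (orb w))) : SemiPow E2 W χ)
        + ((6 * (sgn5 w).val : K15)) • Submodule.Quotient.mk (bvec (reps5 (j5 w))) := by
  have d1 : ∀ w : WD, (10 * ((colF w).1 (orb w)).val : K15) = 10 := by decide
  have d2 : ∀ w : WD, ∀ i, i ≠ orb w → (10 * ((colF w).1 i).val : K15) = 0 := by decide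
  have d3 : ∀ w : WD, (6 * ((colF w).2 (j5 w)).val : K15) = 6 * (sgn5 w).val := by decide
  have d4 : ∀ w : WD, ∀ j, j ≠ j5 w → (6 * ((colF w).2 j).val : K15) = 0 := by decide
  simp only [psi, LinearMap.coe_mk, AddHom.coe_mk]
  rw [Finset.sum_eq_single (orb w) (fun i _ hi => by rw [d2 w i hi, zero_smul])
      (fun h => absurd (Finset.mem_univ _) h),
    Finset.sum_eq_single (j5 w) (fun j _ hj => by rw [d4 w j hj, zero_smul])
      (fun h => absurd (Finset.mem_univ _) h),
    d1 w, d3 w]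

lemma aux1 {M : Type*} [AddCommGroup M] [Module K15 M] (x : M) :
    (10:K15) • x - x = (3:K15) • ((4:K15) • x - x) := by module

lemma aux2 {M : Type*} [AddCommGroup M] [Module K15 M] (a b : M) :
    (10:K15) • a - b = ((4:K15) • a - b) + (2:K15) • ((4:K15) • a - a) := by module

def dec16 : Fin 16 → WD :=
  ![![0,0,0,0], ![1,1,1,1], ![1,0,0,0], ![0,1,0,0], ![0,0,1,0], ![0,0,0,1],
    ![0,1,1,1], ![1,0,1,1], ![1,1,0,1], ![1,1,1,0], ![1,1,0,0], ![0,0,1,1],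
    ![1,0,1,0], ![0,1,0,1], ![1,0,0,1], ![0,1,1,0]]
set_option maxHeartbeats 3000000
set_option synthInstance.maxHeartbeats 400000

/-- Example II.11 (i). Over `K = ℤ/15ℤ`, for the Klein
four-group `W = {1, (12)(34), (13)(24), (14)(23)} ≤ S₄` and the character
`χ` with `χ((12)(34)) = 4`, `χ((13)(24)) = 4`, `χ((14)(23)) = 1`, the module
`[χ]⁴(E) = T⁴(E)/_{χ⁻¹}T⁴(E)` over the free rank-2 module `E` is not free. -/
theorem semiPow_not_free_example
    (c₁ c₂ c₃ : Equiv.Perm (Fin 4))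
    (hc₁ : c₁ = Equiv.swap 0 1 * Equiv.swap 2 3)
    (hc₂ : c₂ = Equiv.swap 0 2 * Equiv.swap 1 3)
    (hc₃ : c₃ = Equiv.swap 0 3 * Equiv.swap 1 2)
    (W : Subgroup (Equiv.Perm (Fin 4)))
    (hW : (W : Set (Equiv.Perm (Fin 4))) = {1, c₁, c₂, c₃})
    (χ : W →* (ZMod 15)ˣ)
    (hχ₁ : ∀ h : c₁ ∈ W, ((χ ⟨c₁, h⟩ : (ZMod 15)ˣ) : ZMod 15) = 4)
    (hχ₂ : ∀ h : c₂ ∈ W, ((χ ⟨c₂, h⟩ : (ZMod 15)ˣ) : ZMod 15) = 4)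
    (hχ₃ : ∀ h : c₃ ∈ W, ((χ ⟨c₃, h⟩ : (ZMod 15)ˣ) : ZMod 15) = 1) :
    ¬ Module.Free (ZMod 15) (SemiPow (Fin 2 → ZMod 15) W χ) := by
  subst hc₁ hc₂ hc₃
  intro hfree
  -- memberships
  have m₁ : Equiv.swap (0:Fin 4) 1 * Equiv.swap 2 3 ∈ W := by
    rw [← SetLike.mem_coe, hW]; simp
  have m₂ : Equiv.swap (0:Fin 4) 2 * Equiv.swap 1 3 ∈ W := by
    rw [← SetLike.mem_coe, hW]; simp
  have m₃ : Equiv.swap (0:Fin 4) 3 * Equiv.swap 1 2 ∈ W := by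
    rw [← SetLike.mem_coe, hW]; simp
  -- inverse character values
  have hu₁ : ∀ h : Equiv.swap (0:Fin 4) 1 * Equiv.swap 2 3 ∈ W,
      (((χ ⟨_, h⟩)⁻¹ : (ZMod 15)ˣ) : ZMod 15) = 4 := by
    intro h
    have h4 : χ ⟨_, h⟩ * χ ⟨_, h⟩ = 1 :=
      Units.ext (by rw [Units.val_mul, hχ₁ h, Units.val_one]; decide)
    rw [inv_eq_of_mul_eq_one_right h4, hχ₁ h]
  have hu₂ : ∀ h : Equiv.swap (0:Fin 4) 2 * Equiv.swap 1 3 ∈ W,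
      (((χ ⟨_, h⟩)⁻¹ : (ZMod 15)ˣ) : ZMod 15) = 4 := by
    intro h
    have h4 : χ ⟨_, h⟩ * χ ⟨_, h⟩ = 1 :=
      Units.ext (by rw [Units.val_mul, hχ₂ h, Units.val_one]; decide)
    rw [inv_eq_of_mul_eq_one_right h4, hχ₂ h]
  have hu₃ : ∀ h : Equiv.swap (0:Fin 4) 3 * Equiv.swap 1 2 ∈ W,
      (((χ ⟨_, h⟩)⁻¹ : (ZMod 15)ˣ) : ZMod 15) = 1 := by
    intro h
    have h4 : χ ⟨_, h⟩ = 1 := Units.ext (by rw [hχ₃ h, Units.val_one])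
    rw [h4, inv_one, Units.val_one]
  -- the kernel bound
  have hN : chiKer E2 W χ ≤ LinearMap.ker phi := by
    rw [chiKer, Submodule.span_le]
    rintro v ⟨σ, z, rfl⟩
    simp only [SetLike.mem_coe, LinearMap.mem_ker]
    obtain ⟨s, hs⟩ := σ
    have hmem : s ∈ ({1, Equiv.swap 0 1 * Equiv.swap 2 3, Equiv.swap 0 2 * Equiv.swap 1 3,
        Equiv.swap 0 3 * Equiv.swap 1 2} : Set (Equiv.Perm (Fin 4))) := by
      rw [← hW]; exact hs
    simp only [Set.mem_insert_iff, Set.mem_singleton_iff] at hmem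
    rcases hmem with h | h | h | h <;> subst h
    · have h1 : (⟨1, hs⟩ : W) = 1 := rfl
      rw [h1, map_one, inv_one, Units.val_one]
      exact key 1 1 (by decide) z
    · rw [hu₁ hs]
      exact key 4 (Equiv.swap 0 1 * Equiv.swap 2 3) (by decide) z
    · rw [hu₂ hs]
      exact key 4 (Equiv.swap 0 2 * Equiv.swap 1 3) (by decide) z
    · rw [hu₃ hs]
      exact key 1 (Equiv.swap 0 3 * Equiv.swap 1 2) (by decide) z
  -- the quotient map
  let φb : SemiPow E2 W χ →ₗ[K15] FF := (chiKer E2 W χ).liftQ phi hN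
  have hφb : ∀ z : T4, φb (Submodule.Quotient.mk z) = phi z := fun z => rfl
  -- right inverse property
  have h1 : φb ∘ₗ psi W χ = LinearMap.id := by
    apply LinearMap.ext
    rintro ⟨x, y⟩
    have q1 : ∀ (a : ZMod 3) (c : ZMod 3), ((10 * a.val : K15)) • c = a * c := by decide
    have q2 : ∀ (b : ZMod 5) (c : ZMod 3), ((6 * b.val : K15)) • c = 0 := by decide
    have q3 : ∀ (a : ZMod 3) (c : ZMod 5), ((10 * a.val : K15)) • c = 0 := by decide
    have q4 : ∀ (b : ZMod 5) (c : ZMod 5), ((6 * b.val : K15)) • c = b * c := by decide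
    have q5 : ∀ (i i₀ : Fin 7), (colF (reps3 i)).1 i₀ = if i = i₀ then 1 else 0 := by decide
    have q6 : ∀ (j j₀ : Fin 3), (colF (reps5 j)).2 j₀ = if j = j₀ then 1 else 0 := by decide
    have q7 : ∀ (j : Fin 3) (i₀ : Fin 7), True := fun _ _ => trivial
    simp only [LinearMap.comp_apply, LinearMap.id_apply, psi, LinearMap.coe_mk, AddHom.coe_mk,
      map_add, map_sum, map_smul, hφb, phi_bvec]
    apply Prod.ext
    · show (_ : Fin 7 → ZMod 3) = x
      funext i₀
      simp only [Prod.fst_add, Prod.fst_sum, Prod.smul_fst, Pi.add_apply, Finset.sum_apply,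
        Pi.smul_apply, q1, q2, q5]
      simp [mul_ite, Finset.sum_ite_eq]
    · show (_ : Fin 3 → ZMod 5) = y
      funext j₀
      simp only [Prod.snd_add, Prod.snd_sum, Prod.smul_snd, Pi.add_apply, Finset.sum_apply,
        Pi.smul_apply, q3, q4, q6]
      simp [mul_ite, Finset.sum_ite_eq]
  -- generators of the kernel submodule
  have gen : ∀ (σ : Equiv.Perm (Fin 4)) (hσ : σ ∈ W) (cv : K15),
      (((χ ⟨σ, hσ⟩)⁻¹ : (ZMod 15)ˣ) : ZMod 15) = cv →
      ∀ w w' : WD, ((fun i => w (σ.symm i)) = w') →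
      cv • bvec w - bvec w' ∈ chiKer E2 W χ := by
    intro σ hσ cv hcv w w' hw
    rw [chiKer]
    apply Submodule.subset_span
    exact ⟨⟨σ, hσ⟩, bvec w, by rw [hcv, permAct_bvec, hw]⟩
  have G1 : ∀ w w' : WD,
      ((fun i => w ((Equiv.swap (0:Fin 4) 1 * Equiv.swap 2 3).symm i)) = w') →
      (4:K15) • bvec w - bvec w' ∈ chiKer E2 W χ :=
    fun w w' h => gen _ m₁ 4 (hu₁ m₁) w w' h
  have G2 : ∀ w w' : WD,
      ((fun i => w ((Equiv.swap (0:Fin 4) 2 * Equiv.swap 1 3).symm i)) = w') →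
      (4:K15) • bvec w - bvec w' ∈ chiKer E2 W χ :=
    fun w w' h => gen _ m₂ 4 (hu₂ m₂) w w' h
  have G3 : ∀ w w' : WD,
      ((fun i => w ((Equiv.swap (0:Fin 4) 3 * Equiv.swap 1 2).symm i)) = w') →
      (1:K15) • bvec w - bvec w' ∈ chiKer E2 W χ :=
    fun w w' h => gen _ m₃ 1 (hu₃ m₃) w w' h
  -- reduction steps
  have step : ∀ w rep : WD, reps3 (orb w) = rep → reps5 (j5 w) = rep →
      ∀ c : K15, ((10 + 6 * ((sgn5 w).val : K15) : K15) = c) →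
      (c • bvec rep - bvec w ∈ chiKer E2 W χ) →
      (10:K15) • (Submodule.Quotient.mk (bvec (reps3 (orb w))) : SemiPow E2 W χ)
        + ((6 * ((sgn5 w).val : K15)) • Submodule.Quotient.mk (bvec (reps5 (j5 w))))
        = Submodule.Quotient.mk (bvec w) := by
    intro w rep h3 h5 c hc hmem
    rw [h3, h5, ← Submodule.Quotient.mk_smul, ← Submodule.Quotient.mk_smul,
      ← Submodule.Quotient.mk_add, Submodule.Quotient.eq, ← add_smul, hc]
    exact hmem
  have step0 : ∀ w rep : WD, reps3 (orb w) = rep → sgn5 w = 0 →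
      ((10:K15) • bvec rep - bvec w ∈ chiKer E2 W χ) →
      (10:K15) • (Submodule.Quotient.mk (bvec (reps3 (orb w))) : SemiPow E2 W χ)
        + ((6 * ((sgn5 w).val : K15)) • Submodule.Quotient.mk (bvec (reps5 (j5 w))))
        = Submodule.Quotient.mk (bvec w) := by
    intro w rep h3 h5 hmem
    rw [h3, h5]
    simp only [ZMod.val_zero, Nat.cast_zero, mul_zero, zero_smul, add_zero]
    rw [← Submodule.Quotient.mk_smul, Submodule.Quotient.eq]
    exact hmem
  -- left inverse property
  have h2 : (psi W χ) ∘ₗ φb = LinearMap.id := by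
    apply Submodule.linearMap_qext
    apply Module.Basis.ext B
    intro w
    obtain ⟨n, rfl⟩ : ∃ n : Fin 16, dec16 n = w := by revert w; decide
    simp only [LinearMap.comp_apply, Submodule.mkQ_apply, LinearMap.id_apply]
    rw [B_apply, hφb, phi_bvec, psi_colF]
    fin_cases n
    · -- 0000
      refine step0 _ ![0,0,0,0] (by decide) (by decide) ?_
      have e := G1 ![0,0,0,0] ![0,0,0,0] (by decide)
      have h9 : (10:K15) • bvec ![0,0,0,0] - bvec ![0,0,0,0]
          = (3:K15) • ((4:K15) • bvec ![0,0,0,0] - bvec ![0,0,0,0]) := aux1 (M := T4) _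
      show (10:K15) • bvec ![0,0,0,0] - bvec ![0,0,0,0] ∈ _
      rw [h9]; exact Submodule.smul_mem _ _ e
    · -- 1111
      refine step0 _ ![1,1,1,1] (by decide) (by decide) ?_
      have e := G1 ![1,1,1,1] ![1,1,1,1] (by decide)
      have h9 : (10:K15) • bvec ![1,1,1,1] - bvec ![1,1,1,1]
          = (3:K15) • ((4:K15) • bvec ![1,1,1,1] - bvec ![1,1,1,1]) := aux1 (M := T4) _
      show (10:K15) • bvec ![1,1,1,1] - bvec ![1,1,1,1] ∈ _
      rw [h9]; exact Submodule.smul_mem _ _ e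
    · -- 1000
      refine step _ ![1,0,0,0] (by decide) (by decide) 1 (by decide) ?_
      show (1:K15) • bvec ![1,0,0,0] - bvec ![1,0,0,0] ∈ _
      rw [one_smul, sub_self]; exact zero_mem _
    · -- 0100
      refine step _ ![1,0,0,0] (by decide) (by decide) 4 (by decide) ?_
      exact G1 ![1,0,0,0] ![0,1,0,0] (by decide)
    · -- 0010
      refine step _ ![1,0,0,0] (by decide) (by decide) 4 (by decide) ?_
      exact G2 ![1,0,0,0] ![0,0,1,0] (by decide)
    · -- 0001
      refine step _ ![1,0,0,0] (by decide) (by decide) 1 (by decide) ?_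
      exact G3 ![1,0,0,0] ![0,0,0,1] (by decide)
    · -- 0111
      refine step _ ![0,1,1,1] (by decide) (by decide) 1 (by decide) ?_
      show (1:K15) • bvec ![0,1,1,1] - bvec ![0,1,1,1] ∈ _
      rw [one_smul, sub_self]; exact zero_mem _
    · -- 1011
      refine step _ ![0,1,1,1] (by decide) (by decide) 4 (by decide) ?_
      exact G1 ![0,1,1,1] ![1,0,1,1] (by decide)
    · -- 1101
      refine step _ ![0,1,1,1] (by decide) (by decide) 4 (by decide) ?_
      exact G2 ![0,1,1,1] ![1,1,0,1] (by decide)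
    · -- 1110
      refine step _ ![0,1,1,1] (by decide) (by decide) 1 (by decide) ?_
      exact G3 ![0,1,1,1] ![1,1,1,0] (by decide)
    · -- 1100
      refine step0 _ ![1,1,0,0] (by decide) (by decide) ?_
      have e := G1 ![1,1,0,0] ![1,1,0,0] (by decide)
      have h9 : (10:K15) • bvec ![1,1,0,0] - bvec ![1,1,0,0]
          = (3:K15) • ((4:K15) • bvec ![1,1,0,0] - bvec ![1,1,0,0]) := aux1 (M := T4) _
      show (10:K15) • bvec ![1,1,0,0] - bvec ![1,1,0,0] ∈ _
      rw [h9]; exact Submodule.smul_mem _ _ e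
    · -- 0011
      refine step0 _ ![1,1,0,0] (by decide) (by decide) ?_
      have e1 := G1 ![1,1,0,0] ![1,1,0,0] (by decide)
      have e2 := G2 ![1,1,0,0] ![0,0,1,1] (by decide)
      have h9 : (10:K15) • bvec ![1,1,0,0] - bvec ![0,0,1,1]
          = ((4:K15) • bvec ![1,1,0,0] - bvec ![0,0,1,1])
            + (2:K15) • ((4:K15) • bvec ![1,1,0,0] - bvec ![1,1,0,0]) := aux2 (M := T4) _ _
      show (10:K15) • bvec ![1,1,0,0] - bvec ![0,0,1,1] ∈ _
      rw [h9]; exact add_mem e2 (Submodule.smul_mem _ _ e1)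
    · -- 1010
      refine step0 _ ![1,0,1,0] (by decide) (by decide) ?_
      have e := G2 ![1,0,1,0] ![1,0,1,0] (by decide)
      have h9 : (10:K15) • bvec ![1,0,1,0] - bvec ![1,0,1,0]
          = (3:K15) • ((4:K15) • bvec ![1,0,1,0] - bvec ![1,0,1,0]) := aux1 (M := T4) _
      show (10:K15) • bvec ![1,0,1,0] - bvec ![1,0,1,0] ∈ _
      rw [h9]; exact Submodule.smul_mem _ _ e
    · -- 0101
      refine step0 _ ![1,0,1,0] (by decide) (by decide) ?_
      have e1 := G2 ![1,0,1,0] ![1,0,1,0] (by decide)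
      have e2 := G1 ![1,0,1,0] ![0,1,0,1] (by decide)
      have h9 : (10:K15) • bvec ![1,0,1,0] - bvec ![0,1,0,1]
          = ((4:K15) • bvec ![1,0,1,0] - bvec ![0,1,0,1])
            + (2:K15) • ((4:K15) • bvec ![1,0,1,0] - bvec ![1,0,1,0]) := aux2 (M := T4) _ _
      show (10:K15) • bvec ![1,0,1,0] - bvec ![0,1,0,1] ∈ _
      rw [h9]; exact add_mem e2 (Submodule.smul_mem _ _ e1)
    · -- 1001
      refine step _ ![1,0,0,1] (by decide) (by decide) 1 (by decide) ?_
      show (1:K15) • bvec ![1,0,0,1] - bvec ![1,0,0,1] ∈ _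
      rw [one_smul, sub_self]; exact zero_mem _
    · -- 0110
      refine step _ ![1,0,0,1] (by decide) (by decide) 4 (by decide) ?_
      exact G1 ![1,0,0,1] ![0,1,1,0] (by decide)
  -- assemble the equivalence and count
  let eqv : SemiPow E2 W χ ≃ₗ[K15] FF := LinearEquiv.ofLinear φb (psi W χ) h1 h2
  haveI : Finite (SemiPow E2 W χ) := Finite.of_equiv FF eqv.symm.toEquiv
  haveI := hfree
  letI : Fintype (SemiPow E2 W χ) := Fintype.ofFinite _
  haveI : Module.Finite K15 (SemiPow E2 W χ) := Module.Finite.of_finite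
  letI : Fintype (Module.Free.ChooseBasisIndex K15 (SemiPow E2 W χ)) :=
    Module.Free.ChooseBasisIndex.fintype K15 (SemiPow E2 W χ)
  let bb := Module.Free.chooseBasis K15 (SemiPow E2 W χ)
  have hcard := Module.card_fintype bb
  have hcardF : Fintype.card (SemiPow E2 W χ) = 273375 := by
    rw [Fintype.card_congr eqv.toEquiv]
    rw [Fintype.card_prod, Fintype.card_fun, Fintype.card_fun, ZMod.card, ZMod.card,
      Fintype.card_fin, Fintype.card_fin]
    norm_num
  rw [hcardF, ZMod.card] at hcard
  rcases le_or_gt (Fintype.card (Module.Free.ChooseBasisIndex K15 (SemiPow E2 W χ))) 4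
    with h | h
  · have hle : (15:ℕ) ^ Fintype.card (Module.Free.ChooseBasisIndex K15 (SemiPow E2 W χ))
        ≤ 15 ^ 4 := Nat.pow_le_pow_right (by norm_num) h
    have h4 : (15:ℕ)^4 = 50625 := by norm_num
    omega
  · have hle : (15:ℕ) ^ 5
        ≤ 15 ^ Fintype.card (Module.Free.ChooseBasisIndex K15 (SemiPow E2 W χ)) :=
      Nat.pow_le_pow_right (by norm_num) h
    have h5 : (15:ℕ)^5 = 759375 := by norm_num
    omega
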